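/- Fix reals A, Δ > 0. For each integer N with N > A/Δ + 1, let x^SC(N) ∈ ℝ^N be the trajectory of Theorem 2: with N_M = ⌈A/Δ⌉ − 1, N_L = ⌈(N − N_M)/2⌉, N_R = ⌊(N − N_M)/2⌋, set x^SC(N)_n = 0 for n ≤ N_L, x^SC(N)_n = (n − N_L)Δ for N_L < n ≤ N − N_R, and x^SC(N)_n = A for n > N − N_R. Then var(x^SC(N)) → A²/4 as N → ∞. Consequently, for positive constants σ, λ, P, b, N · CRB(x^SC(N)) = N·σ²λ²/(8π²PNb²var(x^SC(N))) converges to σ²λ²/(2π²Pb²A²), i.e. the space-constrained CRB decays at rate Θ(N^{−1}) with constant proportional to A^{−2}. -/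

import Mathlib

open Filter


/-- Mean of the first `N` entries of a real sequence. -/
noncomputable def vmean (N : ℕ) (x : ℕ → ℝ) : ℝ :=
  (∑ n ∈ Finset.range N, x n) / (N : ℝ)

/-- Variance of the first `N` entries of a real sequence. -/
noncomputable def vvar (N : ℕ) (x : ℕ → ℝ) : ℝ :=
  (∑ n ∈ Finset.range N, (x n) ^ 2) / (N : ℝ) - (vmean N x) ^ 2


/-- Splitting bound for a "ramp with plateau" sum. -/
lemma sum_plateau_bounds (N M : ℕ) (hN : M ≤ N) (g : ℕ → ℝ) (c v : ℝ)
    (hleft : ∀ k, k + 1 ≤ (N - M + 1) / 2 → g k = 0)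
    (hmid : ∀ k, (N - M + 1) / 2 ≤ k → k < N - (N - M) / 2 → 0 ≤ g k ∧ g k ≤ c)
    (hright : ∀ k, N - (N - M) / 2 ≤ k → k < N → g k = v) :
    v * (((N - M) / 2 : ℕ) : ℝ) ≤ ∑ k ∈ Finset.range N, g k ∧
      ∑ k ∈ Finset.range N, g k ≤ v * (((N - M) / 2 : ℕ) : ℝ) + M * c := by
  have hLQ : (N - M + 1) / 2 ≤ N - (N - M) / 2 := by omega
  have hQN : N - (N - M) / 2 ≤ N := by omega
  have hsplit : ∑ k ∈ Finset.range N, g k =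
      (∑ k ∈ Finset.Ico 0 ((N - M + 1) / 2), g k
        + ∑ k ∈ Finset.Ico ((N - M + 1) / 2) (N - (N - M) / 2), g k)
        + ∑ k ∈ Finset.Ico (N - (N - M) / 2) N, g k := by
    rw [Finset.sum_Ico_consecutive g (Nat.zero_le _) hLQ,
      Finset.sum_Ico_consecutive g (Nat.zero_le _) hQN, Finset.range_eq_Ico]
  have h1 : ∑ k ∈ Finset.Ico 0 ((N - M + 1) / 2), g k = 0 := by
    apply Finset.sum_eq_zero
    intro k hk
    simp only [Finset.mem_Ico] at hk
    exact hleft k (by omega)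
  have h3 : ∑ k ∈ Finset.Ico (N - (N - M) / 2) N, g k = (((N - M) / 2 : ℕ) : ℝ) * v := by
    rw [Finset.sum_congr rfl (fun k hk => by
      simp only [Finset.mem_Ico] at hk
      exact hright k hk.1 hk.2)]
    rw [Finset.sum_const, Nat.card_Ico, nsmul_eq_mul]
    congr 2
    omega
  have h2a : 0 ≤ ∑ k ∈ Finset.Ico ((N - M + 1) / 2) (N - (N - M) / 2), g k := by
    apply Finset.sum_nonneg
    intro k hk
    simp only [Finset.mem_Ico] at hk
    exact (hmid k hk.1 hk.2).1
  have h2b : ∑ k ∈ Finset.Ico ((N - M + 1) / 2) (N - (N - M) / 2), g k ≤ M * c := by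
    calc ∑ k ∈ Finset.Ico ((N - M + 1) / 2) (N - (N - M) / 2), g k
        ≤ (Finset.Ico ((N - M + 1) / 2) (N - (N - M) / 2)).card • c := by
          apply Finset.sum_le_card_nsmul
          intro k hk
          simp only [Finset.mem_Ico] at hk
          exact (hmid k hk.1 hk.2).2
      _ = M * c := by
          rw [Nat.card_Ico, nsmul_eq_mul]
          congr 2
          omega
  constructor
  · rw [hsplit, h1]
    linarith
  · rw [hsplit, h1]
    linarith

/-- The ratio `((N-M)/2)/N → 1/2`. -/
lemma ratio_tendsto (M : ℕ) :
    Tendsto (fun N : ℕ => ((((N - M) / 2 : ℕ)) : ℝ) / N) atTop (nhds (1 / 2)) := by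
  have hlow : Tendsto (fun N : ℕ => (1:ℝ)/2 - ((M:ℝ) + 1)/2 * ((N:ℝ))⁻¹) atTop (nhds (1/2)) := by
    have h := (tendsto_inv_atTop_nhds_zero_nat : Tendsto (fun n : ℕ => ((n:ℝ))⁻¹) atTop (nhds 0)).const_mul (((M:ℝ) + 1)/2)
    simpa using tendsto_const_nhds.sub h
  apply tendsto_of_tendsto_of_tendsto_of_le_of_le' hlow tendsto_const_nhds
  · filter_upwards [eventually_ge_atTop (M + 1)] with N hN
    have hN0 : (0:ℝ) < N := by
      have : (0:ℕ) < N := by omega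
      exact_mod_cast this
    have hkeyn : N - M - 1 ≤ 2 * ((N - M) / 2) := by omega
    have hkey : (N : ℝ) - M - 1 ≤ 2 * (((N - M) / 2 : ℕ) : ℝ) := by
      have hc : ((N - M - 1 : ℕ) : ℝ) = (N:ℝ) - M - 1 := by
        have h' : (N - M - 1 : ℕ) + (M + 1) = N := by omega
        have := congrArg (Nat.cast : ℕ → ℝ) h'
        push_cast at this
        linarith
      have := (Nat.cast_le (α := ℝ)).2 hkeyn
      push_cast at this
      linarith [hc ▸ this]
    rw [le_div_iff₀ hN0]
    nlinarith [inv_mul_cancel₀ (ne_of_gt hN0), hkey]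
  · filter_upwards [eventually_ge_atTop 1] with N hN
    have hN0 : (0:ℝ) < N := by
      have : (0:ℕ) < N := hN
      exact_mod_cast this
    have hkeyn : 2 * ((N - M) / 2) ≤ N := by omega
    have hkey : 2 * (((N - M) / 2 : ℕ) : ℝ) ≤ N := by exact_mod_cast hkeyn
    rw [div_le_iff₀ hN0]
    linarith


lemma main_var (A Δ : ℝ) (hA0 : 0 ≤ A) (hΔ : 0 ≤ Δ) (M : ℕ) :
    Tendsto (fun N : ℕ => vvar N (fun k =>
      if k + 1 ≤ (N - M + 1) / 2 then 0
      else if k + 1 ≤ N - (N - M) / 2 then ((k + 1 - (N - M + 1) / 2 : ℕ) : ℝ) * Δ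
      else A)) atTop (nhds (A ^ 2 / 4)) := by
  set g : ℕ → ℕ → ℝ := fun N k =>
      if k + 1 ≤ (N - M + 1) / 2 then 0
      else if k + 1 ≤ N - (N - M) / 2 then ((k + 1 - (N - M + 1) / 2 : ℕ) : ℝ) * Δ
      else A with hg
  have hsum1 : ∀ N : ℕ, M ≤ N →
      A * (((N - M) / 2 : ℕ) : ℝ) ≤ ∑ k ∈ Finset.range N, g N k ∧
      ∑ k ∈ Finset.range N, g N k ≤ A * (((N - M) / 2 : ℕ) : ℝ) + M * (M * Δ) := by
    intro N hMN
    apply sum_plateau_bounds N M hMN _ (M * Δ) A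
    · intro k hk
      simp only [hg]
      rw [if_pos hk]
    · intro k hk1 hk2
      simp only [hg]
      rw [if_neg (by omega), if_pos (by omega)]
      refine ⟨by positivity, ?_⟩
      have hle : k + 1 - (N - M + 1) / 2 ≤ M := by omega
      have : ((k + 1 - (N - M + 1) / 2 : ℕ) : ℝ) ≤ M := by exact_mod_cast hle
      exact mul_le_mul_of_nonneg_right this hΔ
    · intro k hk1 hk2
      simp only [hg]
      rw [if_neg (by omega), if_neg (by omega)]
  have hsum2 : ∀ N : ℕ, M ≤ N →
      A ^ 2 * (((N - M) / 2 : ℕ) : ℝ) ≤ ∑ k ∈ Finset.range N, (g N k) ^ 2 ∧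
      ∑ k ∈ Finset.range N, (g N k) ^ 2 ≤ A ^ 2 * (((N - M) / 2 : ℕ) : ℝ) + M * (M * Δ) ^ 2 := by
    intro N hMN
    apply sum_plateau_bounds N M hMN _ ((M * Δ) ^ 2) (A ^ 2)
    · intro k hk
      simp only [hg]
      rw [if_pos hk]
      norm_num
    · intro k hk1 hk2
      simp only [hg]
      rw [if_neg (by omega), if_pos (by omega)]
      refine ⟨by positivity, ?_⟩
      have hle : k + 1 - (N - M + 1) / 2 ≤ M := by omega
      have h1 : ((k + 1 - (N - M + 1) / 2 : ℕ) : ℝ) ≤ M := by exact_mod_cast hle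
      have h2 : ((k + 1 - (N - M + 1) / 2 : ℕ) : ℝ) * Δ ≤ (M : ℝ) * Δ :=
        mul_le_mul_of_nonneg_right h1 hΔ
      exact pow_le_pow_left₀ (by positivity) h2 2
    · intro k hk1 hk2
      simp only [hg]
      rw [if_neg (by omega), if_neg (by omega)]
  have hmean : Tendsto (fun N : ℕ => vmean N (g N)) atTop (nhds (A / 2)) := by
    have hlo : Tendsto (fun N : ℕ => A * (((((N - M) / 2 : ℕ)) : ℝ) / N)) atTop (nhds (A / 2)) := by
      have h := (ratio_tendsto M).const_mul A
      have he : A * ((1:ℝ)/2) = A / 2 := by ring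
      rwa [he] at h
    have hhi : Tendsto (fun N : ℕ => A * (((((N - M) / 2 : ℕ)) : ℝ) / N) + (M * (M * Δ)) / N)
        atTop (nhds (A / 2)) := by
      simpa using hlo.add (tendsto_const_div_atTop_nhds_zero_nat ((M : ℝ) * ((M : ℝ) * Δ)))
    apply tendsto_of_tendsto_of_tendsto_of_le_of_le' hlo hhi
    · filter_upwards [eventually_ge_atTop (M + 1)] with N hN
      have hN0 : (0:ℝ) ≤ N := Nat.cast_nonneg N
      have hb := (hsum1 N (by omega)).1
      simp only [vmean]
      rw [← mul_div_assoc]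
      gcongr
    · filter_upwards [eventually_ge_atTop (M + 1)] with N hN
      have hN0 : (0:ℝ) ≤ N := Nat.cast_nonneg N
      have hb := (hsum1 N (by omega)).2
      simp only [vmean]
      rw [← mul_div_assoc, ← add_div]
      gcongr
  have hsq : Tendsto (fun N : ℕ => (∑ k ∈ Finset.range N, (g N k) ^ 2) / N) atTop
      (nhds (A ^ 2 / 2)) := by
    have hlo : Tendsto (fun N : ℕ => A ^ 2 * (((((N - M) / 2 : ℕ)) : ℝ) / N)) atTop
        (nhds (A ^ 2 / 2)) := by
      have h := (ratio_tendsto M).const_mul (A ^ 2)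
      have he : A ^ 2 * ((1:ℝ)/2) = A ^ 2 / 2 := by ring
      rwa [he] at h
    have hhi : Tendsto
        (fun N : ℕ => A ^ 2 * (((((N - M) / 2 : ℕ)) : ℝ) / N) + (M * (M * Δ) ^ 2) / N)
        atTop (nhds (A ^ 2 / 2)) := by
      simpa using hlo.add (tendsto_const_div_atTop_nhds_zero_nat ((M : ℝ) * ((M : ℝ) * Δ) ^ 2))
    apply tendsto_of_tendsto_of_tendsto_of_le_of_le' hlo hhi
    · filter_upwards [eventually_ge_atTop (M + 1)] with N hN
      have hN0 : (0:ℝ) ≤ N := Nat.cast_nonneg N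
      have hb := (hsum2 N (by omega)).1
      rw [← mul_div_assoc]
      gcongr
    · filter_upwards [eventually_ge_atTop (M + 1)] with N hN
      have hN0 : (0:ℝ) ≤ N := Nat.cast_nonneg N
      have hb := (hsum2 N (by omega)).2
      rw [← mul_div_assoc, ← add_div]
      gcongr
  have h := hsq.sub (hmean.pow 2)
  have he : A ^ 2 / 2 - (A / 2) ^ 2 = A ^ 2 / 4 := by ring
  rw [he] at h
  exact h


/-- for fixed `A, Δ > 0`, the space-constrained optimal trajectories
`x^SC(N)` of Theorem 2 satisfy `var(x^SC(N)) → A²/4` as `N → ∞`, and consequently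
`N · CRB(x^SC(N)) → σ²λ²/(2π²Pb²A²)`, i.e. the space-constrained CRB decays at rate
`Θ(N⁻¹)` with constant proportional to `A⁻²`. -/
theorem sc_var_and_crb_scaling (A Δ σ lam P b : ℝ) (hA : 0 < A) (hΔ : 0 < Δ)
    (hσ : 0 < σ) (hlam : 0 < lam) (hP : 0 < P) (hb : 0 < b) :
    let NM : ℕ := (⌈A / Δ⌉).toNat - 1
    let xSC : ℕ → ℕ → ℝ := fun N k =>
      if k + 1 ≤ (N - NM + 1) / 2 then 0
      else if k + 1 ≤ N - (N - NM) / 2 then ((k + 1 - (N - NM + 1) / 2 : ℕ) : ℝ) * Δ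
      else A
    Filter.Tendsto (fun N : ℕ => vvar N (xSC N)) Filter.atTop (nhds (A ^ 2 / 4)) ∧
      Filter.Tendsto
        (fun N : ℕ => (N : ℝ) *
          (σ ^ 2 * lam ^ 2 / (8 * Real.pi ^ 2 * P * (N : ℝ) * b ^ 2 * vvar N (xSC N))))
        Filter.atTop
        (nhds (σ ^ 2 * lam ^ 2 / (2 * Real.pi ^ 2 * P * b ^ 2 * A ^ 2))) := by
  intro NM xSC
  have hvar : Tendsto (fun N : ℕ => vvar N (xSC N)) atTop (nhds (A ^ 2 / 4)) :=
    main_var A Δ hA.le hΔ.le NM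
  refine ⟨hvar, ?_⟩
  have hπ := Real.pi_pos
  have hden : 8 * Real.pi ^ 2 * P * b ^ 2 * (A ^ 2 / 4) ≠ 0 := by positivity
  have hlim : Tendsto
      (fun N : ℕ => σ ^ 2 * lam ^ 2 / (8 * Real.pi ^ 2 * P * b ^ 2 * vvar N (xSC N)))
      atTop (nhds (σ ^ 2 * lam ^ 2 / (8 * Real.pi ^ 2 * P * b ^ 2 * (A ^ 2 / 4)))) :=
    tendsto_const_nhds.div (hvar.const_mul (8 * Real.pi ^ 2 * P * b ^ 2)) hden
  have heq : σ ^ 2 * lam ^ 2 / (8 * Real.pi ^ 2 * P * b ^ 2 * (A ^ 2 / 4))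
      = σ ^ 2 * lam ^ 2 / (2 * Real.pi ^ 2 * P * b ^ 2 * A ^ 2) := by
    congr 1
    ring
  rw [heq] at hlim
  refine hlim.congr' ?_
  filter_upwards [eventually_ge_atTop 1] with N hN
  have hN0 : (N : ℝ) ≠ 0 := Nat.cast_ne_zero.2 (by omega)
  symm
  rw [show 8 * Real.pi ^ 2 * P * (N : ℝ) * b ^ 2 * vvar N (xSC N)
      = (N : ℝ) * (8 * Real.pi ^ 2 * P * b ^ 2 * vvar N (xSC N)) from by ring,
    ← mul_div_assoc, mul_div_mul_left _ _ hN0]
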